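/- arXiv:2008.13677 — 3 statements merged into one kernel-verified Lean document; each statement's English description precedes it below -/
import Mathlib

section
/- Let P be a group and let B₁, B₂ be subgroups of P such that the double coset B₁B₂ is separable in P. Then for every finite subset S of P there exists a finite-index normal subgroup K_S of P such that every normal subgroup N of P with N ≤ K_S is (B₁,B₂,S)-wide. -/
/-- The double coset `B₁B₂ = {b₁ * b₂ : b₁ ∈ B₁, b₂ ∈ B₂}` of two subgroups. -/
def DoubleCoset {P : Type*} [Group P] (B₁ B₂ : Subgroup P) : Set P :=
  {x : P | ∃ b₁ ∈ B₁, ∃ b₂ ∈ B₂, x = b₁ * b₂}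

/-- The double coset `B₁B₂` is separable in `P`: for every `g ∈ P \ B₁B₂` there is a
finite-index subgroup of `P` containing `B₁B₂` but not `g`. -/
def IsSeparableDoubleCoset {P : Type*} [Group P] (B₁ B₂ : Subgroup P) : Prop :=
  ∀ g : P, g ∉ DoubleCoset B₁ B₂ →
    ∃ H : Subgroup P, H.FiniteIndex ∧ DoubleCoset B₁ B₂ ⊆ (H : Set P) ∧ g ∉ H

/-- A subgroup `N` is `(B₁,B₂,S)`-wide: whenever `b₁ ∈ B₁`, `b₂ ∈ B₂`, `s ∈ S` with
`b₁ * s * b₂ ∈ N`, we have `s ∈ B₁B₂`. -/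
def IsWide {P : Type*} [Group P] (N B₁ B₂ : Subgroup P) (S : Finset P) : Prop :=
  ∀ b₁ ∈ B₁, ∀ b₂ ∈ B₂, ∀ s ∈ S, b₁ * s * b₂ ∈ N → s ∈ DoubleCoset B₁ B₂

lemma normal_iInf_aux {P : Type*} [Group P] {ι : Type*} {f : ι → Subgroup P}
    (h : ∀ i, (f i).Normal) : (⨅ i, f i).Normal := by
  constructor
  intro n hn g
  rw [Subgroup.mem_iInf] at hn ⊢
  exact fun i => (h i).conj_mem n (hn i) g

/-- If the double coset `B₁B₂` is separable in `P`, then for every finite subset `S` of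
`P` there is a finite-index normal subgroup `K` of `P` such that every normal subgroup
`N ≤ K` of `P` is `(B₁,B₂,S)`-wide. -/
theorem exists_finiteIndex_normal_wide {P : Type*} [Group P] (B₁ B₂ : Subgroup P)
    (hsep : IsSeparableDoubleCoset B₁ B₂) (S : Finset P) :
    ∃ K : Subgroup P, K.Normal ∧ K.FiniteIndex ∧
      ∀ N : Subgroup P, N.Normal → N ≤ K → IsWide N B₁ B₂ S := by
  classical
  set T : Finset P := S.filter (fun s => s ∉ DoubleCoset B₁ B₂) with hT
  choose H hHfi hHsub hHnot using fun s (hs : s ∉ DoubleCoset B₁ B₂) => hsep s hs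
  set f : {s : P // s ∈ T} → Subgroup P :=
    fun s => (H s.1 ((Finset.mem_filter.mp s.2).2)).normalCore with hf
  refine ⟨⨅ s, f s, ?_, ?_, ?_⟩
  · exact normal_iInf_aux fun s => Subgroup.normalCore_normal _
  · exact Subgroup.finiteIndex_iInf fun s => @Subgroup.finiteIndex_normalCore _ _ _ (hHfi _ _)
  · intro N hN hNK b₁ hb₁ b₂ hb₂ s hs hmem
    by_contra hsD
    have hsT : s ∈ T := Finset.mem_filter.mpr ⟨hs, hsD⟩
    set Hs := H s hsD with hHs
    have h1 : b₁ * s * b₂ ∈ Hs := by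
      have h2 : b₁ * s * b₂ ∈ f ⟨s, hsT⟩ := (iInf_le f ⟨s, hsT⟩) (hNK hmem)
      exact Hs.normalCore_le h2
    have hb1H : b₁ ∈ Hs := hHsub s hsD ⟨b₁, hb₁, 1, B₂.one_mem, by simp⟩
    have hb2H : b₂ ∈ Hs := hHsub s hsD ⟨1, B₁.one_mem, b₂, hb₂, by simp⟩
    have : s ∈ Hs := by
      have := Hs.mul_mem (Hs.mul_mem (Hs.inv_mem hb1H) h1) (Hs.inv_mem hb2H)
      simpa [mul_assoc] using this
    exact hHnot s hsD this
end

section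
/- In a convex geodesic metric space, every geodesic triangle whose insize is at most K is K-thin, for any K ≥ 0. -/
/-- A unit-speed geodesic from `a` to `b`, defined on `[0, dist a b]`. -/
def IsGeodesicSegment {M : Type*} [MetricSpace M] (γ : ℝ → M) (a b : M) : Prop :=
  γ 0 = a ∧ γ (dist a b) = b ∧
    ∀ s ∈ Set.Icc (0 : ℝ) (dist a b), ∀ t ∈ Set.Icc (0 : ℝ) (dist a b),
      dist (γ s) (γ t) = |s - t|

/-- A geodesic metric space: every two points are joined by a geodesic. -/
def GeodesicSpace (M : Type*) [MetricSpace M] : Prop :=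
  ∀ a b : M, ∃ γ : ℝ → M, IsGeodesicSegment γ a b

/-- A geodesic metric space is convex if for every pair of geodesics, parametrized
proportionally to arc length on `[0,1]`, the distance between corresponding points is a
convex function. -/
def ConvexMetric (M : Type*) [MetricSpace M] : Prop :=
  ∀ (a₁ b₁ a₂ b₂ : M) (γ₁ γ₂ : ℝ → M),
    IsGeodesicSegment γ₁ a₁ b₁ → IsGeodesicSegment γ₂ a₂ b₂ →
    ConvexOn ℝ (Set.Icc (0 : ℝ) 1)
      (fun t : ℝ => dist (γ₁ (t * dist a₁ b₁)) (γ₂ (t * dist a₂ b₂)))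

/-- The Gromov product `(b,c)_a`. -/
noncomputable def gromovProd {M : Type*} [MetricSpace M] (a b c : M) : ℝ :=
  (dist a b + dist a c - dist b c) / 2

/-- A geodesic triangle: vertices `v 0, v 1, v 2` together with a choice of geodesic side
`side i` from `v i` to `v (i+1)`. -/
structure GeodesicTriangle (M : Type*) [MetricSpace M] where
  v : Fin 3 → M
  side : Fin 3 → ℝ → M
  isGeod : ∀ i : Fin 3, IsGeodesicSegment (side i) (v i) (v (i + 1))

namespace GeodesicTriangle

variable {M : Type*} [MetricSpace M]

/-- The Gromov product of the two other vertices at vertex `i`, i.e. the length of the leg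
of the comparison tripod corresponding to vertex `i`. -/
noncomputable def gp (Δ : GeodesicTriangle M) (i : Fin 3) : ℝ :=
  gromovProd (Δ.v i) (Δ.v (i + 1)) (Δ.v (i + 2))

/-- The fiber of the tripod map over the point of the leg at vertex `i` at distance `t`
from its endpoint: the two points at distance `t` from `v i` on the two sides adjacent
to `v i` (valid for `0 ≤ t ≤ Δ.gp i`). -/
def legFiber (Δ : GeodesicTriangle M) (i : Fin 3) (t : ℝ) : Set M :=
  {Δ.side i t, Δ.side (i + 2) (dist (Δ.v (i + 2)) (Δ.v i) - t)}

/-- The fiber of the tripod map over the central point of the tripod: the three internal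
points of the triangle. -/
noncomputable def centralFiber (Δ : GeodesicTriangle M) : Set M :=
  {Δ.side 0 (Δ.gp 0), Δ.side 1 (Δ.gp 1), Δ.side 2 (Δ.gp 2)}

/-- `F` is a fiber of the canonical map `π` from the triangle to its comparison tripod. -/
def IsTripodFiber (Δ : GeodesicTriangle M) (F : Set M) : Prop :=
  (∃ i : Fin 3, ∃ t : ℝ, 0 ≤ t ∧ t ≤ Δ.gp i ∧ F = Δ.legFiber i t) ∨ F = Δ.centralFiber

/-- A triangle is ν-thin if every fiber of the map to the comparison tripod has diameter
at most ν. -/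
def IsThin (Δ : GeodesicTriangle M) (ν : ℝ) : Prop :=
  ∀ F : Set M, Δ.IsTripodFiber F → Metric.diam F ≤ ν

/-- The insize of a triangle: the diameter of the fiber over the central point of the
comparison tripod. -/
noncomputable def insize (Δ : GeodesicTriangle M) : ℝ :=
  Metric.diam Δ.centralFiber

/-- A triangle is ν-thin relative to `U` if it is not ν-thin, and every fiber of the
tripod map either has diameter at most ν or is contained in the closed ν-neighborhood
of `U`. -/
def IsThinRel (Δ : GeodesicTriangle M) (ν : ℝ) (U : Set M) : Prop :=
  ¬ Δ.IsThin ν ∧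
    ∀ F : Set M, Δ.IsTripodFiber F →
      Metric.diam F ≤ ν ∨ F ⊆ Metric.cthickening ν U

/-- The fiber of the tripod map through the point of side `i` at arclength `t` from
`v i`. -/
noncomputable def fiberOnSide (Δ : GeodesicTriangle M) (i : Fin 3) (t : ℝ) : Set M :=
  if t < Δ.gp i then Δ.legFiber i t
  else if Δ.gp i < t then Δ.legFiber (i + 1) (dist (Δ.v i) (Δ.v (i + 1)) - t)
  else Δ.centralFiber

/-- The ν-fat part of side `i` of the triangle: those points of the side whose fiber under
the tripod map has diameter at least ν. -/
noncomputable def fatPartOfSide (Δ : GeodesicTriangle M) (ν : ℝ) (i : Fin 3) : Set M :=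
  Δ.side i '' {t : ℝ | t ∈ Set.Icc 0 (dist (Δ.v i) (Δ.v (i + 1))) ∧
    ν ≤ Metric.diam (Δ.fiberOnSide i t)}

end GeodesicTriangle

/-- `(M, 𝒰)` has ν-relatively thin triangles if every geodesic triangle is either ν-thin
or ν-thin relative to some `U ∈ 𝒰`. -/
def HasRelThinTriangles (M : Type*) [MetricSpace M] (𝒰 : Set (Set M)) (ν : ℝ) : Prop :=
  ∀ Δ : GeodesicTriangle M, Δ.IsThin ν ∨ ∃ U ∈ 𝒰, Δ.IsThinRel ν U

/-- `(M, 𝒰)` is a (ν,φ)-relatively hyperbolic pair. -/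
def IsRelHypPair (M : Type*) [MetricSpace M] (𝒰 : Set (Set M)) (ν : ℝ) (φ : ℝ → ℝ) :
    Prop :=
  HasRelThinTriangles M 𝒰 ν ∧
    ∀ r : ℝ, 0 ≤ r → ∀ F₁ ∈ 𝒰, ∀ F₂ ∈ 𝒰, F₁ ≠ F₂ →
      Metric.diam (Metric.cthickening r F₁ ∩ Metric.cthickening r F₂) ≤ φ r

/-- A geodesic metric space is CAT(0) iff it satisfies the CN (Bruhat–Tits) inequality,
which is equivalent to the CAT(0) comparison inequality for geodesic triangles. -/
def IsCAT0 (M : Type*) [MetricSpace M] : Prop :=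
  GeodesicSpace M ∧
    ∀ x a b m : M, dist a m = dist a b / 2 → dist b m = dist a b / 2 →
      dist x m ^ 2 ≤ (dist x a ^ 2 + dist x b ^ 2) / 2 - dist a b ^ 2 / 4

/-- A subset is geodesically convex if it contains every geodesic between its points. -/
def IsGeodesicallyConvex {M : Type*} [MetricSpace M] (Z : Set M) : Prop :=
  ∀ a ∈ Z, ∀ b ∈ Z, ∀ γ : ℝ → M, IsGeodesicSegment γ a b →
    ∀ t ∈ Set.Icc (0 : ℝ) (dist a b), γ t ∈ Z

/-- `Z` is η-super-attractive: for any `K ≥ 0` and points `a, b` in the closed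
`K`-neighborhood of `Z`, all of the geodesic `[a,b]` except possibly the initial and
terminal segments of length `η + K` lies in `Z`. -/
def IsSuperAttractive {M : Type*} [MetricSpace M] (η : ℝ) (Z : Set M) : Prop :=
  ∀ K : ℝ, 0 ≤ K →
    ∀ a ∈ Metric.cthickening K Z, ∀ b ∈ Metric.cthickening K Z,
      ∀ γ : ℝ → M, IsGeodesicSegment γ a b →
        ∀ t : ℝ, η + K ≤ t → t ≤ dist a b - (η + K) → γ t ∈ Z

/-- The image of a geodesic from `a` to `b`. -/
def geodesicImage {M : Type*} [MetricSpace M] (γ : ℝ → M) (a b : M) : Set M :=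
  γ '' Set.Icc 0 (dist a b)

/-- A geodesic quadrilateral with vertices `x₁ x₂ x₃ x₄` and sides `γ₁ γ₂ γ₃ γ₄`
(where `γᵢ` joins `xᵢ` to `x_{i+1}`, cyclically) is μ-slim if each side is contained in
the closed μ-neighborhood of the union of the other three sides. -/
def IsSlimQuadrilateral {M : Type*} [MetricSpace M] (μ : ℝ) (x₁ x₂ x₃ x₄ : M)
    (γ₁ γ₂ γ₃ γ₄ : ℝ → M) : Prop :=
  geodesicImage γ₁ x₁ x₂ ⊆ Metric.cthickening μ
      (geodesicImage γ₂ x₂ x₃ ∪ geodesicImage γ₃ x₃ x₄ ∪ geodesicImage γ₄ x₄ x₁) ∧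
  geodesicImage γ₂ x₂ x₃ ⊆ Metric.cthickening μ
      (geodesicImage γ₁ x₁ x₂ ∪ geodesicImage γ₃ x₃ x₄ ∪ geodesicImage γ₄ x₄ x₁) ∧
  geodesicImage γ₃ x₃ x₄ ⊆ Metric.cthickening μ
      (geodesicImage γ₁ x₁ x₂ ∪ geodesicImage γ₂ x₂ x₃ ∪ geodesicImage γ₄ x₄ x₁) ∧
  geodesicImage γ₄ x₄ x₁ ⊆ Metric.cthickening μ
      (geodesicImage γ₁ x₁ x₂ ∪ geodesicImage γ₂ x₂ x₃ ∪ geodesicImage γ₃ x₃ x₄)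

/-- The image of `S` under the nearest-point projection to `Z` (as a set of nearest
points). -/
def projSet {M : Type*} [MetricSpace M] (Z S : Set M) : Set M :=
  {p : M | p ∈ Z ∧ ∃ x ∈ S, dist x p = Metric.infDist x Z}

lemma fin3_add21 : ∀ i : Fin 3, i + 2 + 1 = i := by decide

lemma fin3_add22 : ∀ i : Fin 3, i + 2 + 2 = i + 1 := by decide

lemma mem_centralFiber {M : Type*} [MetricSpace M] (Δ : GeodesicTriangle M) (j : Fin 3) :
    Δ.side j (Δ.gp j) ∈ Δ.centralFiber := by
  fin_cases j <;> simp [GeodesicTriangle.centralFiber]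

/-- In a convex geodesic metric space, every geodesic triangle whose insize is at most `K`
is `K`-thin, for any `K ≥ 0`. -/
theorem isThin_of_insize_le {M : Type*} [MetricSpace M]
    (hgeo : GeodesicSpace M) (hconv : ConvexMetric M)
    (K : ℝ) (hK : 0 ≤ K) (Δ : GeodesicTriangle M) (hins : Δ.insize ≤ K) :
    Δ.IsThin K := by
  intro F hF
  rcases hF with ⟨i, t, ht0, htgp, rfl⟩ | rfl
  swap
  · exact hins
  -- notation
  set a := Δ.v i with ha
  set b := Δ.v (i + 1) with hb
  set c := Δ.v (i + 2) with hc
  have h21 : Δ.v (i + 2 + 1) = a := by rw [fin3_add21]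
  have h22 : Δ.v (i + 2 + 2) = b := by rw [fin3_add22]
  obtain ⟨s0, s1, s2⟩ := Δ.isGeod i
  obtain ⟨g0, g1, g2⟩ := Δ.isGeod (i + 2)
  rw [h21] at g1 g2
  set D : ℝ := dist c a with hD
  set L : ℝ := dist a b with hL
  -- basic inequalities for the Gromov product
  have hgp : Δ.gp i = (dist a b + dist a c - dist b c) / 2 := rfl
  have hgp2 : Δ.gp (i + 2) = (dist c a + dist c b - dist a b) / 2 := by
    simp only [GeodesicTriangle.gp, gromovProd, h21, h22]
    rfl
  have tri1 := dist_triangle b a c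
  have tri2 := dist_triangle a b c
  have tri3 := dist_triangle a c b
  have hca : dist c a = dist a c := dist_comm c a
  have hcb : dist c b = dist b c := dist_comm c b
  have hba : dist b a = dist a b := dist_comm b a
  have hgp0 : 0 ≤ Δ.gp i := by rw [hgp]; linarith
  have hgpL : Δ.gp i ≤ L := by rw [hgp, hL]; linarith
  have hgpD : Δ.gp i ≤ D := by rw [hgp, hD, hca]; linarith
  have hD0 : 0 ≤ D := dist_nonneg
  have hDsub : D - Δ.gp i = Δ.gp (i + 2) := by
    rw [hgp, hgp2, hD, hca, hcb]; ring
  -- the second branch of the fiber as a geodesic from `a`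
  set g : ℝ → M := fun s => Δ.side (i + 2) (D - s) with hg
  set p : M := Δ.side i (Δ.gp i) with hp
  set q : M := g (Δ.gp i) with hq
  have hdp : dist a p = Δ.gp i := by
    rw [hp, ha, ← s0]
    rw [s2 0 ⟨le_refl 0, dist_nonneg⟩ (Δ.gp i) ⟨hgp0, hgpL⟩]
    rw [abs_of_nonpos (by linarith)]; ring
  have hga : g 0 = a := by
    show Δ.side (i + 2) (D - 0) = a
    rw [sub_zero]; exact g1
  have hdq : dist a q = Δ.gp i := by
    have hDIcc : D ∈ Set.Icc (0 : ℝ) (dist c a) := ⟨hD0, le_refl D⟩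
    have hDt : D - Δ.gp i ∈ Set.Icc (0 : ℝ) (dist c a) := ⟨by linarith, by linarith⟩
    rw [hq, ← hga, hg]
    simp only [sub_zero]
    rw [g2 D hDIcc (D - Δ.gp i) hDt, abs_of_nonneg (by linarith)]; ring
  have hgeod1 : IsGeodesicSegment (Δ.side i) a p := by
    refine ⟨s0, by rw [hdp], fun s hs u hu => ?_⟩
    rw [hdp] at hs hu
    exact s2 s ⟨hs.1, le_trans hs.2 hgpL⟩ u ⟨hu.1, le_trans hu.2 hgpL⟩
  have hgeod2 : IsGeodesicSegment g a q := by
    refine ⟨hga, by rw [hdq], fun s hs u hu => ?_⟩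
    rw [hdq] at hs hu
    rw [hg]
    simp only
    rw [g2 (D - s) ⟨by linarith [hs.1, hs.2], by linarith [hs.1]⟩
      (D - u) ⟨by linarith [hu.1, hu.2], by linarith [hu.1]⟩]
    rw [show D - s - (D - u) = -(s - u) by ring, abs_neg]
  -- the two points of the fiber
  have hfiber : Δ.legFiber i t = {Δ.side i t, g t} := by
    rw [GeodesicTriangle.legFiber, hg]
  rw [hfiber, Metric.diam_pair]
  -- distance between the central points is at most K
  have hpq : dist p q ≤ K := by
    have hqc : q ∈ Δ.centralFiber := by
      have : q = Δ.side (i + 2) (Δ.gp (i + 2)) := by rw [hq, hg]; simp [hDsub]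
      rw [this]; exact mem_centralFiber Δ (i + 2)
    have hpc : p ∈ Δ.centralFiber := mem_centralFiber Δ i
    have hbd : Bornology.IsBounded Δ.centralFiber := by
      rw [GeodesicTriangle.centralFiber]
      exact ((Set.finite_singleton _).insert _ |>.insert _).isBounded
    calc dist p q ≤ Metric.diam Δ.centralFiber := Metric.dist_le_diam_of_mem hbd hpc hqc
      _ ≤ K := hins
  -- degenerate case
  rcases eq_or_lt_of_le hgp0 with hgpz | hgppos
  · have htz : t = 0 := le_antisymm (by rw [← hgpz] at htgp; exact htgp) ht0
    have : dist (Δ.side i t) (g t) = 0 := by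
      rw [htz, s0, hga, dist_self]
    rw [this]; exact hK
  -- main case: use convexity
  have hcv := hconv a p a q (Δ.side i) g hgeod1 hgeod2
  set f : ℝ → ℝ := fun s => dist (Δ.side i (s * dist a p)) (g (s * dist a q)) with hf
  have hcvf : ConvexOn ℝ (Set.Icc (0 : ℝ) 1) f := hcv
  set lam : ℝ := t / Δ.gp i with hlam
  have hlam0 : 0 ≤ lam := div_nonneg ht0 (le_of_lt hgppos)
  have hlam1 : lam ≤ 1 := (div_le_one hgppos).mpr htgp
  have hlamgp : lam * Δ.gp i = t := div_mul_cancel₀ t (ne_of_gt hgppos)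
  have hkey : f lam ≤ (1 - lam) * f 0 + lam * f 1 := by
    have h0 : (0 : ℝ) ∈ Set.Icc (0 : ℝ) 1 := by norm_num
    have h1 : (1 : ℝ) ∈ Set.Icc (0 : ℝ) 1 := by norm_num
    have := hcvf.2 h0 h1 (by linarith : (0:ℝ) ≤ 1 - lam) hlam0 (by ring)
    simpa using this
  have hf0 : f 0 = 0 := by
    rw [hf]; simp only [zero_mul]; rw [s0, hga, dist_self]
  have hf1 : f 1 = dist p q := by
    rw [hf]; simp only [one_mul]; rw [hdp, hdq]
  have hflam : f lam = dist (Δ.side i t) (g t) := by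
    rw [hf]; simp only [hdp, hdq, hlamgp]
  rw [← hflam]
  calc f lam ≤ (1 - lam) * f 0 + lam * f 1 := hkey
    _ = lam * dist p q := by rw [hf0, hf1]; ring
    _ ≤ 1 * dist p q := by
        apply mul_le_mul_of_nonneg_right hlam1 dist_nonneg
    _ = dist p q := one_mul _
    _ ≤ K := hpq
end

section
/- Let Δ be a geodesic triangle in a convex geodesic metric space, let ν > 0, and suppose Δ is ν-thin relative to a subset Z. If the ν-fat part of some side of Δ has diameter at most L, then Δ is 2(L+ν)-thin. -/
section RelThinAux
open Set Metric

variable {M : Type*} [MetricSpace M]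

private lemma fin_a : ∀ j : Fin 3, j + 1 + 1 = j + 2 := by decide
private lemma fin_b : ∀ j : Fin 3, j + 1 + 2 = j := by decide
private lemma fin_c : ∀ j : Fin 3, j + 2 + 1 = j := by decide
private lemma fin_d : ∀ j : Fin 3, j + 2 + 2 = j + 1 := by decide
private lemma fin_e : ∀ i j : Fin 3, j = i ∨ j = i + 1 ∨ j = i + 2 := by decide

private lemma dist_start {γ : ℝ → M} {a b : M} (h : IsGeodesicSegment γ a b) {t : ℝ}
    (h0 : 0 ≤ t) (h1 : t ≤ dist a b) : dist a (γ t) = t := by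
  have h2 := h.2.2 0 ⟨le_refl _, dist_nonneg⟩ t ⟨h0, h1⟩
  rw [h.1] at h2
  rw [h2, abs_of_nonpos (by linarith)]; ring

private lemma geod_trunc {γ : ℝ → M} {a b : M} (h : IsGeodesicSegment γ a b) {t₀ : ℝ}
    (h0 : 0 ≤ t₀) (h1 : t₀ ≤ dist a b) : IsGeodesicSegment γ a (γ t₀) := by
  have hd : dist a (γ t₀) = t₀ := dist_start h h0 h1
  refine ⟨h.1, by rw [hd], ?_⟩
  intro s hs t ht
  rw [hd] at hs ht
  exact h.2.2 s ⟨hs.1, hs.2.trans h1⟩ t ⟨ht.1, ht.2.trans h1⟩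

private lemma geod_rev {γ : ℝ → M} {a b : M} (h : IsGeodesicSegment γ a b) :
    IsGeodesicSegment (fun t => γ (dist a b - t)) b a := by
  have hba : dist b a = dist a b := dist_comm b a
  refine ⟨by simp [h.2.1], by simp [hba, h.1], ?_⟩
  intro s hs t ht
  rw [hba] at hs ht
  have h2 := h.2.2 (dist a b - s) ⟨by linarith [hs.2], by linarith [hs.1]⟩
    (dist a b - t) ⟨by linarith [ht.2], by linarith [ht.1]⟩
  simp only []
  rw [h2, show dist a b - s - (dist a b - t) = t - s by ring, abs_sub_comm]

private lemma geod_continuousOn {γ : ℝ → M} {a b : M} (h : IsGeodesicSegment γ a b) :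
    ContinuousOn γ (Set.Icc 0 (dist a b)) := by
  have hl : LipschitzOnWith 1 γ (Set.Icc 0 (dist a b)) := by
    rw [lipschitzOnWith_iff_dist_le_mul]
    intro x hx y hy
    rw [h.2.2 x hx y hy, Real.dist_eq]
    simp
  exact hl.continuousOn

private lemma dist_mono (hconv : ConvexMetric M) {γ₁ γ₂ : ℝ → M} {p q₁ q₂ : M}
    (h₁ : IsGeodesicSegment γ₁ p q₁) (h₂ : IsGeodesicSegment γ₂ p q₂)
    {s t : ℝ} (hs : 0 ≤ s) (hst : s ≤ t) (ht₁ : t ≤ dist p q₁) (ht₂ : t ≤ dist p q₂) :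
    dist (γ₁ s) (γ₂ s) ≤ dist (γ₁ t) (γ₂ t) := by
  rcases eq_or_lt_of_le (hs.trans hst) with h0 | h0
  · have hs0 : s = 0 := le_antisymm (by linarith) hs
    rw [hs0, ← h0]
  · have g₁ := geod_trunc h₁ h0.le ht₁
    have g₂ := geod_trunc h₂ h0.le ht₂
    have d₁ : dist p (γ₁ t) = t := dist_start h₁ h0.le ht₁
    have d₂ : dist p (γ₂ t) = t := dist_start h₂ h0.le ht₂
    have hc := hconv p (γ₁ t) p (γ₂ t) γ₁ γ₂ g₁ g₂
    rw [d₁, d₂] at hc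
    have hst' : s / t ≤ 1 := by rw [div_le_one h0]; exact hst
    have hst0 : 0 ≤ s / t := by positivity
    have key := hc.2 (show (0:ℝ) ∈ Set.Icc (0:ℝ) 1 by norm_num)
      (show (1:ℝ) ∈ Set.Icc (0:ℝ) 1 by norm_num)
      (show (0:ℝ) ≤ 1 - s / t by linarith) hst0 (by ring)
    have harg : (1 - s / t) • (0 : ℝ) + (s / t) • (1 : ℝ) = s / t := by
      simp
    rw [harg] at key
    simp only [smul_eq_mul] at key
    rw [div_mul_cancel₀ s h0.ne', zero_mul, one_mul, h₁.1, h₂.1, dist_self] at key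
    nlinarith [dist_nonneg (x := γ₁ t) (y := γ₂ t), key]

end RelThinAux
section RelThinAux2
open Set Metric

variable {M : Type*} [MetricSpace M]

private lemma gp_add (Δ : GeodesicTriangle M) (j : Fin 3) :
    Δ.gp j + Δ.gp (j + 1) = dist (Δ.v j) (Δ.v (j + 1)) := by
  unfold GeodesicTriangle.gp gromovProd
  rw [fin_a j, fin_b j, dist_comm (Δ.v (j+1)) (Δ.v j), dist_comm (Δ.v (j+2)) (Δ.v j)]
  ring

private lemma gp_nonneg (Δ : GeodesicTriangle M) (j : Fin 3) : 0 ≤ Δ.gp j := by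
  unfold GeodesicTriangle.gp gromovProd
  have h := dist_triangle (Δ.v (j+1)) (Δ.v j) (Δ.v (j+2))
  rw [dist_comm (Δ.v (j+1)) (Δ.v j)] at h
  linarith

/-- `dist (v (j+2)) (v j) = gp (j+2) + gp j`. -/
private lemma dist_v2 (Δ : GeodesicTriangle M) (j : Fin 3) :
    dist (Δ.v (j + 2)) (Δ.v j) = Δ.gp (j + 2) + Δ.gp j := by
  have h := gp_add Δ (j + 2)
  rw [fin_c j] at h
  linarith

/-- the reversed side `j+2` is a geodesic from `v j` to `v (j+2)`. -/
private lemma rev_side (Δ : GeodesicTriangle M) (j : Fin 3) :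
    IsGeodesicSegment (fun t => Δ.side (j + 2) (dist (Δ.v (j + 2)) (Δ.v j) - t))
      (Δ.v j) (Δ.v (j + 2)) := by
  have h := geod_rev (Δ.isGeod (j + 2))
  rwa [fin_c j] at h

private lemma leg_mono (hconv : ConvexMetric M) (Δ : GeodesicTriangle M) (j : Fin 3)
    {s t : ℝ} (hs : 0 ≤ s) (hst : s ≤ t) (ht : t ≤ Δ.gp j) :
    dist (Δ.side j s) (Δ.side (j + 2) (dist (Δ.v (j + 2)) (Δ.v j) - s))
      ≤ dist (Δ.side j t) (Δ.side (j + 2) (dist (Δ.v (j + 2)) (Δ.v j) - t)) := by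
  have h1 : t ≤ dist (Δ.v j) (Δ.v (j + 1)) := by
    have := gp_add Δ j; have := gp_nonneg Δ (j + 1); linarith
  have h2 : t ≤ dist (Δ.v j) (Δ.v (j + 2)) := by
    rw [dist_comm, dist_v2 Δ j]; have := gp_nonneg Δ (j + 2); linarith
  exact dist_mono hconv (Δ.isGeod j) (rev_side Δ j) hs hst h1 h2

private lemma central_mem (Δ : GeodesicTriangle M) (j : Fin 3) :
    Δ.side j (Δ.gp j) ∈ Δ.centralFiber := by
  fin_cases j <;> simp [GeodesicTriangle.centralFiber]

private lemma central_bounded (Δ : GeodesicTriangle M) :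
    Bornology.IsBounded Δ.centralFiber :=
  by
  unfold GeodesicTriangle.centralFiber
  exact ((Set.finite_singleton _).insert _).insert _ |>.isBounded

private lemma side_dist (Δ : GeodesicTriangle M) (j : Fin 3) {s t : ℝ}
    (hs : s ∈ Set.Icc 0 (dist (Δ.v j) (Δ.v (j + 1))))
    (ht : t ∈ Set.Icc 0 (dist (Δ.v j) (Δ.v (j + 1)))) :
    dist (Δ.side j s) (Δ.side j t) = |s - t| :=
  (Δ.isGeod j).2.2 s hs t ht

private lemma gp_le_side (Δ : GeodesicTriangle M) (j : Fin 3) :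
    Δ.gp j ≤ dist (Δ.v j) (Δ.v (j + 1)) := by
  have := gp_add Δ j; have := gp_nonneg Δ (j + 1); linarith

private lemma fin_f : ∀ j k : Fin 3, k = j ∨ k = j + 2 ∨ j = k + 2 := by decide

private lemma central_elem (Δ : GeodesicTriangle M) :
    ∀ x ∈ Δ.centralFiber, ∃ j : Fin 3, x = Δ.side j (Δ.gp j) := by
  intro x hx
  unfold GeodesicTriangle.centralFiber at hx
  simp only [Set.mem_insert_iff, Set.mem_singleton_iff] at hx
  rcases hx with h | h | h
  exacts [⟨0, h⟩, ⟨1, h⟩, ⟨2, h⟩]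

end RelThinAux2
/-- If a geodesic triangle in a convex geodesic metric space is ν-thin relative to a set
`Z` (where `ν > 0`), and the ν-fat part of some side has diameter at most `L`, then the
triangle is `2(L+ν)`-thin. -/
theorem isThin_of_isThinRel_of_fatPart_small {M : Type*} [MetricSpace M]
    (hgeo : GeodesicSpace M) (hconv : ConvexMetric M)
    (Δ : GeodesicTriangle M) (ν L : ℝ) (hν : 0 < ν) (Z : Set M)
    (hrel : Δ.IsThinRel ν Z) (i : Fin 3)
    (hfat : Metric.diam (Δ.fatPartOfSide ν i) ≤ L) :
    Δ.IsThin (2 * (L + ν)) := by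
  have hL0 : (0:ℝ) ≤ L := le_trans Metric.diam_nonneg hfat
  have hν0 : (0:ℝ) ≤ ν := hν.le
  have hD1 : Δ.gp i + Δ.gp (i+1) = dist (Δ.v i) (Δ.v (i+1)) := gp_add Δ i
  have hDv2 : dist (Δ.v (i+2)) (Δ.v i) = Δ.gp (i+2) + Δ.gp i := dist_v2 Δ i
  have hgi0 := gp_nonneg Δ i
  have hgi10 := gp_nonneg Δ (i+1)
  have hgi20 := gp_nonneg Δ (i+2)
  -- the fat part is bounded
  have hPbdd : Bornology.IsBounded (Δ.fatPartOfSide ν i) := by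
    apply (Metric.isBounded_closedBall
      (x := Δ.v i) (r := dist (Δ.v i) (Δ.v (i+1)))).subset
    rintro x ⟨t, ⟨⟨ht0, htD⟩, -⟩, rfl⟩
    have hdt : dist (Δ.side i t) (Δ.v i) = t := by
      rw [dist_comm, dist_start (Δ.isGeod i) ht0 htD]
    rw [Metric.mem_closedBall, hdt]; exact htD
  -- two fat points on side i are at parameter distance ≤ L
  have hPdist : ∀ s t : ℝ, 0 ≤ s → s ≤ t → t ≤ dist (Δ.v i) (Δ.v (i+1)) →
      Δ.side i s ∈ Δ.fatPartOfSide ν i → Δ.side i t ∈ Δ.fatPartOfSide ν i →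
      t - s ≤ L := by
    intro s t hs hst ht h1 h2
    have hd := Metric.dist_le_diam_of_mem hPbdd h1 h2
    rw [side_dist Δ i ⟨hs, by linarith⟩ ⟨by linarith, ht⟩,
      abs_of_nonpos (by linarith)] at hd
    linarith
  -- the middle point of side i is fat as soon as the central fiber is ν-big
  have hmidfat : ν ≤ Metric.diam Δ.centralFiber →
      Δ.side i (Δ.gp i) ∈ Δ.fatPartOfSide ν i := by
    intro hc
    refine ⟨Δ.gp i, ⟨⟨hgi0, gp_le_side Δ i⟩, ?_⟩, rfl⟩
    have hcf : Δ.fiberOnSide i (Δ.gp i) = Δ.centralFiber := by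
      unfold GeodesicTriangle.fiberOnSide
      rw [if_neg (lt_irrefl _), if_neg (lt_irrefl _)]
    rw [hcf]; exact hc
  -- distances along side (i+2)
  have hsd2 : ∀ {s t : ℝ}, s ∈ Set.Icc 0 (dist (Δ.v (i+2)) (Δ.v i)) →
      t ∈ Set.Icc 0 (dist (Δ.v (i+2)) (Δ.v i)) →
      dist (Δ.side (i+2) s) (Δ.side (i+2) t) = |s - t| := by
    have h := Δ.isGeod (i+2); rw [fin_c i] at h
    intro s t hs ht
    exact h.2.2 s hs t ht
  -- Claim G : the pair (p_i, p_{i+2})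
  have claimG : ∃ A : ℝ, 0 ≤ A ∧
      dist (Δ.side i (Δ.gp i)) (Δ.side (i+2) (Δ.gp (i+2))) ≤ ν + 2*A ∧
      (A = 0 ∨ ∃ t₁, 0 ≤ t₁ ∧ t₁ ≤ Δ.gp i ∧ A = Δ.gp i - t₁ ∧
        Δ.side i t₁ ∈ Δ.fatPartOfSide ν i ∧
        Δ.side i (Δ.gp i) ∈ Δ.fatPartOfSide ν i) := by
    by_cases hg : dist (Δ.side i (Δ.gp i)) (Δ.side (i+2) (Δ.gp (i+2))) ≤ ν
    · exact ⟨0, le_refl 0, by linarith, Or.inl rfl⟩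
    push_neg at hg
    have hνc : ν < Metric.diam Δ.centralFiber :=
      lt_of_lt_of_le hg (Metric.dist_le_diam_of_mem (central_bounded Δ)
        (central_mem Δ i) (central_mem Δ (i+2)))
    have hcont : ContinuousOn (fun t => dist (Δ.side i t)
        (Δ.side (i+2) (dist (Δ.v (i+2)) (Δ.v i) - t))) (Set.Icc 0 (Δ.gp i)) := by
      have c1 : ContinuousOn (Δ.side i) (Set.Icc 0 (Δ.gp i)) :=
        (geod_continuousOn (Δ.isGeod i)).mono
          (Set.Icc_subset_Icc le_rfl (gp_le_side Δ i))
      have c2 : ContinuousOn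
          (fun t => Δ.side (i+2) (dist (Δ.v (i+2)) (Δ.v i) - t))
          (Set.Icc 0 (Δ.gp i)) :=
        (geod_continuousOn (rev_side Δ i)).mono
          (Set.Icc_subset_Icc le_rfl
            (by rw [dist_comm (Δ.v i) (Δ.v (i+2)), hDv2]; linarith))
      exact continuous_dist.comp_continuousOn (c1.prodMk c2)
    have hg0 : dist (Δ.side i 0)
        (Δ.side (i+2) (dist (Δ.v (i+2)) (Δ.v i) - 0)) = 0 := by
      have h2 := (rev_side Δ i).1
      simp only [] at h2
      rw [(Δ.isGeod i).1, h2, dist_self]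
    have hmem : ν ∈ Set.Icc
        (dist (Δ.side i 0) (Δ.side (i+2) (dist (Δ.v (i+2)) (Δ.v i) - 0)))
        (dist (Δ.side i (Δ.gp i))
          (Δ.side (i+2) (dist (Δ.v (i+2)) (Δ.v i) - Δ.gp i))) := by
      rw [hg0, show dist (Δ.v (i+2)) (Δ.v i) - Δ.gp i = Δ.gp (i+2) from
        by rw [hDv2]; ring]
      exact ⟨hν0, hg.le⟩
    obtain ⟨t₁, ht₁, hgt₁⟩ := intermediate_value_Icc hgi0 hcont hmem
    have hgt₁' : dist (Δ.side i t₁)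
        (Δ.side (i+2) (dist (Δ.v (i+2)) (Δ.v i) - t₁)) = ν := hgt₁
    refine ⟨Δ.gp i - t₁, by linarith [ht₁.2], ?_,
      Or.inr ⟨t₁, ht₁.1, ht₁.2, rfl, ?_, hmidfat hνc.le⟩⟩
    · -- the distance bound
      have e1 : dist (Δ.side i (Δ.gp i)) (Δ.side i t₁) = Δ.gp i - t₁ := by
        rw [side_dist Δ i ⟨hgi0, gp_le_side Δ i⟩
          ⟨ht₁.1, le_trans ht₁.2 (gp_le_side Δ i)⟩,
          abs_of_nonneg (by linarith [ht₁.2])]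
      have e2 : dist (Δ.side (i+2) (dist (Δ.v (i+2)) (Δ.v i) - t₁))
          (Δ.side (i+2) (Δ.gp (i+2))) = Δ.gp i - t₁ := by
        rw [hsd2 ⟨by linarith [ht₁.2], by linarith [ht₁.1]⟩
          ⟨hgi20, by linarith⟩, hDv2,
          show Δ.gp (i+2) + Δ.gp i - t₁ - Δ.gp (i+2) = Δ.gp i - t₁ from by ring,
          abs_of_nonneg (by linarith [ht₁.2])]
      have h4 := dist_triangle4 (Δ.side i (Δ.gp i)) (Δ.side i t₁)
        (Δ.side (i+2) (dist (Δ.v (i+2)) (Δ.v i) - t₁)) (Δ.side (i+2) (Δ.gp (i+2)))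
      rw [e1, e2, hgt₁'] at h4
      linarith
    · -- side i t₁ is fat
      refine ⟨t₁, ⟨⟨ht₁.1, le_trans ht₁.2 (gp_le_side Δ i)⟩, ?_⟩, rfl⟩
      rcases lt_or_eq_of_le ht₁.2 with hlt | heq
      · have hfib : Δ.fiberOnSide i t₁ = Δ.legFiber i t₁ := by
          unfold GeodesicTriangle.fiberOnSide; rw [if_pos hlt]
        rw [hfib]
        unfold GeodesicTriangle.legFiber
        rw [Metric.diam_pair, hgt₁']
      · have hfib : Δ.fiberOnSide i t₁ = Δ.centralFiber := by
          unfold GeodesicTriangle.fiberOnSide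
          rw [heq, if_neg (lt_irrefl _), if_neg (lt_irrefl _)]
        rw [hfib]; exact hνc.le
  -- Claim H : the pair (p_{i+1}, p_i)
  have claimH : ∃ B : ℝ, 0 ≤ B ∧
      dist (Δ.side (i+1) (Δ.gp (i+1))) (Δ.side i (Δ.gp i)) ≤ ν + 2*B ∧
      (B = 0 ∨ ∃ u₁, Δ.gp i ≤ u₁ ∧ u₁ ≤ dist (Δ.v i) (Δ.v (i+1)) ∧
        B = u₁ - Δ.gp i ∧ Δ.side i u₁ ∈ Δ.fatPartOfSide ν i ∧
        Δ.side i (Δ.gp i) ∈ Δ.fatPartOfSide ν i) := by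
    by_cases hg : dist (Δ.side (i+1) (Δ.gp (i+1))) (Δ.side i (Δ.gp i)) ≤ ν
    · exact ⟨0, le_refl 0, by linarith, Or.inl rfl⟩
    push_neg at hg
    have hνc : ν < Metric.diam Δ.centralFiber :=
      lt_of_lt_of_le hg (Metric.dist_le_diam_of_mem (central_bounded Δ)
        (central_mem Δ (i+1)) (central_mem Δ i))
    have hrev : IsGeodesicSegment
        (fun s => Δ.side i (dist (Δ.v i) (Δ.v (i+1)) - s)) (Δ.v (i+1)) (Δ.v i) :=
      geod_rev (Δ.isGeod i)
    have hside1 : IsGeodesicSegment (Δ.side (i+1)) (Δ.v (i+1)) (Δ.v (i+2)) := by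
      have h := Δ.isGeod (i+1); rwa [fin_a i] at h
    have hd12 : dist (Δ.v (i+1)) (Δ.v (i+2)) = Δ.gp (i+1) + Δ.gp (i+2) := by
      have h := gp_add Δ (i+1); rw [fin_a i] at h; linarith
    have hcont : ContinuousOn (fun s => dist (Δ.side (i+1) s)
        (Δ.side i (dist (Δ.v i) (Δ.v (i+1)) - s))) (Set.Icc 0 (Δ.gp (i+1))) := by
      have c1 : ContinuousOn (Δ.side (i+1)) (Set.Icc 0 (Δ.gp (i+1))) :=
        (geod_continuousOn hside1).mono
          (Set.Icc_subset_Icc le_rfl (by rw [hd12]; linarith))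
      have c2 : ContinuousOn
          (fun s => Δ.side i (dist (Δ.v i) (Δ.v (i+1)) - s))
          (Set.Icc 0 (Δ.gp (i+1))) :=
        (geod_continuousOn hrev).mono
          (Set.Icc_subset_Icc le_rfl
            (by rw [dist_comm (Δ.v (i+1)) (Δ.v i)]; linarith))
      exact continuous_dist.comp_continuousOn (c1.prodMk c2)
    have hh0 : dist (Δ.side (i+1) 0)
        (Δ.side i (dist (Δ.v i) (Δ.v (i+1)) - 0)) = 0 := by
      have h2 := hrev.1
      simp only [] at h2
      rw [hside1.1, h2, dist_self]
    have hmem : ν ∈ Set.Icc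
        (dist (Δ.side (i+1) 0) (Δ.side i (dist (Δ.v i) (Δ.v (i+1)) - 0)))
        (dist (Δ.side (i+1) (Δ.gp (i+1)))
          (Δ.side i (dist (Δ.v i) (Δ.v (i+1)) - Δ.gp (i+1)))) := by
      rw [hh0, show dist (Δ.v i) (Δ.v (i+1)) - Δ.gp (i+1) = Δ.gp i from
        by rw [← hD1]; ring]
      exact ⟨hν0, hg.le⟩
    obtain ⟨s₁, hs₁, hhs₁⟩ := intermediate_value_Icc hgi10 hcont hmem
    have hhs₁' : dist (Δ.side (i+1) s₁)
        (Δ.side i (dist (Δ.v i) (Δ.v (i+1)) - s₁)) = ν := hhs₁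
    refine ⟨Δ.gp (i+1) - s₁, by linarith [hs₁.2], ?_,
      Or.inr ⟨dist (Δ.v i) (Δ.v (i+1)) - s₁, by linarith [hs₁.2],
        by linarith [hs₁.1], by linarith, ?_, hmidfat hνc.le⟩⟩
    · -- the distance bound
      have e1 : dist (Δ.side (i+1) (Δ.gp (i+1))) (Δ.side (i+1) s₁)
          = Δ.gp (i+1) - s₁ := by
        rw [hside1.2.2 (Δ.gp (i+1)) ⟨hgi10, by rw [hd12]; linarith⟩ s₁
          ⟨hs₁.1, by rw [hd12]; linarith [hs₁.2]⟩,
          abs_of_nonneg (by linarith [hs₁.2])]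
      have e2 : dist (Δ.side i (dist (Δ.v i) (Δ.v (i+1)) - s₁))
          (Δ.side i (Δ.gp i)) = Δ.gp (i+1) - s₁ := by
        rw [side_dist Δ i ⟨by linarith [hs₁.2], by linarith [hs₁.1]⟩
          ⟨hgi0, gp_le_side Δ i⟩, show dist (Δ.v i) (Δ.v (i+1)) - s₁ - Δ.gp i
            = Δ.gp (i+1) - s₁ from by rw [← hD1]; ring,
          abs_of_nonneg (by linarith [hs₁.2])]
      have h4 := dist_triangle4 (Δ.side (i+1) (Δ.gp (i+1))) (Δ.side (i+1) s₁)
        (Δ.side i (dist (Δ.v i) (Δ.v (i+1)) - s₁)) (Δ.side i (Δ.gp i))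
      rw [e1, e2, hhs₁'] at h4
      linarith
    · -- side i (D1 - s₁) is fat
      refine ⟨dist (Δ.v i) (Δ.v (i+1)) - s₁,
        ⟨⟨by linarith [hs₁.2], by linarith [hs₁.1]⟩, ?_⟩, rfl⟩
      rcases lt_or_eq_of_le hs₁.2 with hlt | heq
      · have hfib : Δ.fiberOnSide i (dist (Δ.v i) (Δ.v (i+1)) - s₁)
            = Δ.legFiber (i+1) s₁ := by
          unfold GeodesicTriangle.fiberOnSide
          rw [if_neg (by push_neg; linarith), if_pos (by linarith),
            show dist (Δ.v i) (Δ.v (i+1)) - (dist (Δ.v i) (Δ.v (i+1)) - s₁) = s₁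
              from by ring]
        rw [hfib]
        unfold GeodesicTriangle.legFiber
        rw [fin_b i, Metric.diam_pair, hhs₁']
      · have hfib : Δ.fiberOnSide i (dist (Δ.v i) (Δ.v (i+1)) - s₁)
            = Δ.centralFiber := by
          unfold GeodesicTriangle.fiberOnSide
          rw [show dist (Δ.v i) (Δ.v (i+1)) - s₁ = Δ.gp i from
            by rw [← hD1, heq]; ring,
            if_neg (lt_irrefl _), if_neg (lt_irrefl _)]
        rw [hfib]; exact hνc.le
  obtain ⟨A, hA0, hGdist, hGfat⟩ := claimG
  obtain ⟨B, hB0, hHdist, hHfat⟩ := claimH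
  -- A + B ≤ L
  have hAB : A + B ≤ L := by
    rcases hGfat with rfl | ⟨t₁, ht₁0, ht₁g, rfl, ht₁fat, hmfat⟩
    · rcases hHfat with rfl | ⟨u₁, hu₁g, hu₁D, rfl, hu₁fat, hmfat⟩
      · simpa using hL0
      · have := hPdist (Δ.gp i) u₁ hgi0 hu₁g hu₁D hmfat hu₁fat
        linarith
    · rcases hHfat with rfl | ⟨u₁, hu₁g, hu₁D, rfl, hu₁fat, hmfat'⟩
      · have := hPdist t₁ (Δ.gp i) ht₁0 ht₁g (gp_le_side Δ i) ht₁fat hmfat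
        linarith
      · have := hPdist t₁ u₁ ht₁0 (le_trans ht₁g hu₁g) hu₁D ht₁fat hu₁fat
        linarith
  -- bounds on the three central pairs
  have key : ∀ j : Fin 3, dist (Δ.side j (Δ.gp j)) (Δ.side (j+2) (Δ.gp (j+2)))
      ≤ 2 * (L + ν) := by
    intro j
    rcases fin_e i j with rfl | rfl | rfl
    · linarith
    · rw [fin_b i]; linarith
    · rw [fin_d i, dist_comm]
      have htri := dist_triangle (Δ.side (i+1) (Δ.gp (i+1)))
        (Δ.side i (Δ.gp i)) (Δ.side (i+2) (Δ.gp (i+2)))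
      linarith
  have hC0 : (0:ℝ) ≤ 2 * (L + ν) := by linarith
  -- conclusion
  intro F hF
  rcases hF with ⟨j, t, ht0, htg, rfl⟩ | rfl
  · unfold GeodesicTriangle.legFiber
    rw [Metric.diam_pair]
    calc dist (Δ.side j t) (Δ.side (j+2) (dist (Δ.v (j+2)) (Δ.v j) - t))
        ≤ dist (Δ.side j (Δ.gp j))
            (Δ.side (j+2) (dist (Δ.v (j+2)) (Δ.v j) - Δ.gp j)) :=
          leg_mono hconv Δ j ht0 htg le_rfl
      _ = dist (Δ.side j (Δ.gp j)) (Δ.side (j+2) (Δ.gp (j+2))) := by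
          rw [show dist (Δ.v (j+2)) (Δ.v j) - Δ.gp j = Δ.gp (j+2) from
            by rw [dist_v2 Δ j]; ring]
      _ ≤ 2 * (L + ν) := key j
  · apply Metric.diam_le_of_forall_dist_le hC0
    intro x hx y hy
    obtain ⟨j, rfl⟩ := central_elem Δ x hx
    obtain ⟨k, rfl⟩ := central_elem Δ y hy
    rcases fin_f j k with rfl | rfl | rfl
    · rw [dist_self]; exact hC0
    · exact key j
    · rw [dist_comm]; exact key k
end
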